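/- Let k ≥ 1 and let θ denote the operator on formal power series over ℚ given by θ(G) = X·G′. Suppose F ∈ ℚ⟦X⟧ satisfies θ^k F = X · (kθ+1)(kθ+2)⋯(kθ+k) F and has constant coefficient equal to 1. Then F = Σ_{m≥0} ((km)!/(m!)^k)·X^m; i.e. the hypergeometric equation θ^k F = X·∏_{j=1}^k (kθ+j) F has a unique formal power series solution with constant term 1, namely Σ_{m≥0} ((km)!/(m!)^k)·X^m. -/

import Mathlib

open PowerSeries

lemma prod_fact (m : ℕ) : ∀ k : ℕ,
    (((List.range k).map fun j : ℕ => (m : ℚ) + j + 1).prod) * m.factorial = (m + k).factorial := by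
  intro k
  induction k with
  | zero => simp
  | succ k ih =>
    rw [List.range_succ, List.map_append, List.prod_append]
    simp only [List.map_cons, List.map_nil, List.prod_cons, List.prod_nil, mul_one]
    have : (m + (k+1)).factorial = (m + k + 1) * (m + k).factorial := by
      rw [← Nat.add_assoc, Nat.factorial_succ]
    rw [this]
    push_cast
    rw [← ih]; ring

lemma flatMap_cast (l : List ℕ) :
    (l.flatMap fun a => [(a : ℚ)]) = List.map (fun a : ℕ => (a : ℚ)) l := by
  induction l with
  | nil => rfl
  | cons a l ih => exact congrArg (List.cons (a : ℚ)) ih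

theorem stmt14 (k : ℕ) (hk : 1 ≤ k)
    (θ : PowerSeries ℚ → PowerSeries ℚ)
    (hθ : ∀ G, θ G = PowerSeries.X * PowerSeries.derivative ℚ G)
    (F : PowerSeries ℚ)
    (heq : θ^[k] F =
      PowerSeries.X *
        (List.range k).foldr (fun j G => (k : ℚ) • θ G + ((j : ℚ) + 1) • G) F)
    (hconst : PowerSeries.constantCoeff F = 1) :
    F = PowerSeries.mk fun m => ((k * m).factorial : ℚ) / ((m.factorial : ℚ) ^ k) := by
  -- coefficient of θ
  have hcoeff : ∀ (G : PowerSeries ℚ) (n : ℕ), coeff (R := ℚ) n (θ G) = n * coeff (R := ℚ) n G := by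
    intro G n
    rw [hθ]
    cases n with
    | zero => simp
    | succ n =>
      rw [coeff_succ_X_mul, coeff_derivative]
      push_cast; ring
  -- coefficient of θ iterated
  have hiter : ∀ (m : ℕ) (G : PowerSeries ℚ) (n : ℕ),
      coeff (R := ℚ) n (θ^[m] G) = (n : ℚ) ^ m * coeff (R := ℚ) n G := by
    intro m
    induction m with
    | zero => simp
    | succ m ih =>
      intro G n
      rw [Function.iterate_succ_apply, ih, hcoeff]
      ring
  -- coefficient of foldr
  have hfold : ∀ (l : List ℚ) (G : PowerSeries ℚ) (n : ℕ),
      coeff (R := ℚ) n (l.foldr (fun j G => (k : ℚ) • θ G + (j + 1) • G) G) =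
        (l.map fun j : ℚ => (k : ℚ) * n + j + 1).prod * coeff (R := ℚ) n G := by
    intro l
    induction l with
    | nil => simp
    | cons j l ih =>
      intro G n
      simp only [List.foldr_cons, List.map_cons, List.prod_cons, map_add, map_smul,
        smul_eq_mul, hcoeff, ih]
      ring
  have key : ∀ n : ℕ, coeff (R := ℚ) n F = ((k * n).factorial : ℚ) / ((n.factorial : ℚ) ^ k) := by
    intro n
    induction n with
    | zero => simpa using hconst
    | succ n ih =>
      have h := congrArg (coeff (R := ℚ) (n + 1)) heq
      rw [hiter, coeff_succ_X_mul] at h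
      rw [show (do let a ← List.range k; pure ((a : ℚ))) =
          (List.range k).map (fun a : ℕ => (a : ℚ)) from
           (by induction (List.range k) with
                | nil => rfl
                | cons a l ih => exact congrArg (List.cons (a : ℚ)) ih), hfold, List.map_map, Function.comp_def] at h
      have hne : ((n : ℚ) + 1) ^ k ≠ 0 := by positivity
      have hprod := prod_fact (k * n) k
      have hfact : (((k * (n + 1)).factorial : ℚ)) =
          (((List.range k).map fun j : ℕ => ((k * n : ℕ) : ℚ) + j + 1).prod) * (k * n).factorial := by
        rw [hprod, Nat.mul_add, Nat.mul_one]
      have : coeff (R := ℚ) (n + 1) F =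
          (((List.range k).map fun j : ℕ => (k : ℚ) * n + j + 1).prod) * coeff (R := ℚ) n F /
            ((n : ℚ) + 1) ^ k := by
        field_simp at h ⊢
        push_cast at h ⊢
        linarith [h]
      rw [this, ih]
      have hc : (((List.range k).map fun j : ℕ => ((k * n : ℕ) : ℚ) + j + 1)) =
          ((List.range k).map fun j : ℕ => (k : ℚ) * n + j + 1) := by
        congr 1; push_cast; rfl
      rw [hc] at hfact
      rw [Nat.factorial_succ]
      have hnf : ((n.factorial : ℚ)) ≠ 0 := Nat.cast_ne_zero.mpr n.factorial_ne_zero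
      field_simp
      rw [hfact]
      push_cast
      rw [mul_pow]
      ring
  ext n
  rw [coeff_mk]
  exact key n
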